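/- arXiv:1402.1093 — 4 statements merged into one kernel-verified Lean document; each statement's English description precedes it below -/
import Mathlib

section
/- Let {E_j} be real energies with probabilities p_j ≥ 0 summing to 1, and define η_ε = max over E ∈ ℝ of Σ_{j: E_j ∈ [E, E+ε]} p_j. Then for every T > 0 and every δ > 0, Σ_{j,k} p_j p_k e^{−2|E_j − E_k|T} ≤ 2η_{δ/(2T)} / (1 − e^{−δ}). In particular (δ = 2), Σ_{j,k} p_j p_k e^{−2|E_j − E_k|T} ≤ 2η_{1/T}/(1 − e^{−2}). -/
open Finset Real

lemma key_aux {n : ℕ} (E p : Fin n → ℝ) (hp : ∀ j, 0 ≤ p j) (hsum : ∑ j, p j = 1)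
    (η : ℝ → ℝ)
    (hη : ∀ ε, η ε = ⨆ E0 : ℝ,
        ∑ j ∈ Finset.univ.filter (fun j => E0 ≤ E j ∧ E j ≤ E0 + ε), p j)
    (T ε : ℝ) (hT : 0 < T) (hε : 0 < ε) :
    ∑ j, ∑ k, p j * p k * Real.exp (-2 * |E j - E k| * T)
      ≤ 2 * η ε / (1 - Real.exp (-(2 * ε * T))) := by
  set c := 2 * ε * T with hc
  have hcpos : 0 < c := by positivity
  set q := Real.exp (-c) with hq
  have hq0 : 0 ≤ q := (Real.exp_pos _).le
  have hq1 : q < 1 := by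
    rw [hq, ← Real.exp_zero]
    exact Real.exp_lt_exp.mpr (by linarith)
  have hden : 0 < 1 - q := by linarith
  have hbdd : BddAbove (Set.range fun E0 : ℝ =>
      ∑ j ∈ Finset.univ.filter (fun j => E0 ≤ E j ∧ E j ≤ E0 + ε), p j) := by
    refine ⟨1, ?_⟩
    rintro x ⟨E0, rfl⟩
    exact le_trans (Finset.sum_le_sum_of_subset_of_nonneg (Finset.filter_subset _ _)
        (fun i _ _ => hp i)) (le_of_eq hsum)
  have hle : ∀ E0 : ℝ,
      ∑ j ∈ Finset.univ.filter (fun j => E0 ≤ E j ∧ E j ≤ E0 + ε), p j ≤ η ε := by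
    intro E0; rw [hη]; exact le_ciSup hbdd E0
  have hηnn : 0 ≤ η ε := le_trans (Finset.sum_nonneg fun i _ => hp i) (hle 0)
  have inner : ∀ j, ∑ k, p k * Real.exp (-2 * |E j - E k| * T)
      ≤ 2 * η ε / (1 - q) := by
    intro j
    set m : Fin n → ℕ := fun k => ⌊|E j - E k| / ε⌋₊ with hm
    set N : ℕ := (Finset.univ.sup m) + 1 with hN
    have hmN : ∀ k, m k ∈ Finset.range N := fun k =>
      Finset.mem_range.mpr (Nat.lt_succ_of_le (Finset.le_sup (Finset.mem_univ k)))
    have hsplit : ∑ k, p k * Real.exp (-2 * |E j - E k| * T)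
        = ∑ i ∈ Finset.range N, ∑ k ∈ Finset.univ.filter (fun k => m k = i),
            p k * Real.exp (-2 * |E j - E k| * T) :=
      (Finset.sum_fiberwise_of_maps_to (fun k _ => hmN k) _).symm
    rw [hsplit]
    have hterm : ∀ i ∈ Finset.range N,
        ∑ k ∈ Finset.univ.filter (fun k => m k = i),
            p k * Real.exp (-2 * |E j - E k| * T) ≤ q ^ i * (2 * η ε) := by
      intro i _
      have hbounds : ∀ k, m k = i → ((i:ℝ) * ε ≤ |E j - E k| ∧ |E j - E k| < ((i:ℝ)+1) * ε) := by
        intro k hmk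
        have h0 : (0:ℝ) ≤ |E j - E k| / ε := by positivity
        have hfl : (i:ℝ) ≤ |E j - E k| / ε := by
          have := Nat.floor_le h0
          rw [show ⌊|E j - E k| / ε⌋₊ = m k from rfl, hmk] at this
          exact this
        have hfu : |E j - E k| / ε < (i:ℝ) + 1 := by
          have := Nat.lt_floor_add_one (|E j - E k| / ε)
          rw [show ⌊|E j - E k| / ε⌋₊ = m k from rfl, hmk] at this
          push_cast at this
          exact this
        constructor
        · calc (i:ℝ) * ε ≤ (|E j - E k| / ε) * ε := mul_le_mul_of_nonneg_right hfl hε.le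
            _ = |E j - E k| := by field_simp
        · calc |E j - E k| = (|E j - E k| / ε) * ε := by field_simp
            _ < ((i:ℝ)+1) * ε := by
              exact mul_lt_mul_of_pos_right hfu hε
      have step1 : ∑ k ∈ Finset.univ.filter (fun k => m k = i),
          p k * Real.exp (-2 * |E j - E k| * T)
          ≤ ∑ k ∈ Finset.univ.filter (fun k => m k = i), p k * q ^ i := by
        refine Finset.sum_le_sum fun k hk => ?_
        have hmk : m k = i := (Finset.mem_filter.mp hk).2
        have h1 := (hbounds k hmk).1
        have hexp : Real.exp (-2 * |E j - E k| * T) ≤ q ^ i := by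
          have h2 : Real.exp (-2 * |E j - E k| * T) ≤ Real.exp ((i:ℕ) * (-c)) := by
            apply Real.exp_le_exp.mpr
            rw [hc]
            push_cast
            nlinarith
          calc Real.exp (-2 * |E j - E k| * T) ≤ Real.exp ((i:ℕ) * (-c)) := h2
            _ = q ^ i := by rw [Real.exp_nat_mul, hq]
        exact mul_le_mul_of_nonneg_left hexp (hp k)
      have step2 : ∑ k ∈ Finset.univ.filter (fun k => m k = i), p k ≤ 2 * η ε := by
        have hsplit2 := Finset.sum_filter_add_sum_filter_not
          (Finset.univ.filter (fun k => m k = i)) (fun k => E j ≤ E k) p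
        have hA : ∑ k ∈ (Finset.univ.filter (fun k => m k = i)).filter (fun k => E j ≤ E k),
            p k ≤ η ε := by
          refine le_trans (Finset.sum_le_sum_of_subset_of_nonneg ?_ fun k _ _ => hp k)
            (hle (E j + i * ε))
          intro k hk
          simp only [Finset.mem_filter, Finset.mem_univ, true_and] at hk ⊢
          obtain ⟨hmk, hjk⟩ := hk
          obtain ⟨h1, h2⟩ := hbounds k hmk
          have habs : |E j - E k| = E k - E j := by
            rw [abs_sub_comm]; exact abs_of_nonneg (by linarith)
          rw [habs] at h1 h2
          constructor <;> nlinarith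
        have hB : ∑ k ∈ (Finset.univ.filter (fun k => m k = i)).filter (fun k => ¬ E j ≤ E k),
            p k ≤ η ε := by
          refine le_trans (Finset.sum_le_sum_of_subset_of_nonneg ?_ fun k _ _ => hp k)
            (hle (E j - ((i:ℝ)+1) * ε))
          intro k hk
          simp only [Finset.mem_filter, Finset.mem_univ, true_and, not_le] at hk ⊢
          obtain ⟨hmk, hjk⟩ := hk
          obtain ⟨h1, h2⟩ := hbounds k hmk
          have habs : |E j - E k| = E j - E k := abs_of_nonneg (by linarith)
          rw [habs] at h1 h2
          constructor <;> nlinarith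
        linarith
      calc ∑ k ∈ Finset.univ.filter (fun k => m k = i),
            p k * Real.exp (-2 * |E j - E k| * T)
          ≤ ∑ k ∈ Finset.univ.filter (fun k => m k = i), p k * q ^ i := step1
        _ = (∑ k ∈ Finset.univ.filter (fun k => m k = i), p k) * q ^ i := by
            rw [← Finset.sum_mul]
        _ ≤ (2 * η ε) * q ^ i := mul_le_mul_of_nonneg_right step2 (pow_nonneg hq0 i)
        _ = q ^ i * (2 * η ε) := mul_comm _ _
    calc ∑ i ∈ Finset.range N, ∑ k ∈ Finset.univ.filter (fun k => m k = i),
            p k * Real.exp (-2 * |E j - E k| * T)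
        ≤ ∑ i ∈ Finset.range N, q ^ i * (2 * η ε) := Finset.sum_le_sum hterm
      _ = (∑ i ∈ Finset.range N, q ^ i) * (2 * η ε) := by rw [← Finset.sum_mul]
      _ ≤ (1 / (1 - q)) * (2 * η ε) := by
          apply mul_le_mul_of_nonneg_right _ (by positivity)
          rw [geom_sum_eq (by linarith : q ≠ 1) N,
            show (q ^ N - 1) / (q - 1) = (1 - q ^ N) / (1 - q) by
              rw [← neg_div_neg_eq]; ring_nf]
          gcongr
          nlinarith [pow_nonneg hq0 N]
      _ = 2 * η ε / (1 - q) := by ring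
  calc ∑ j, ∑ k, p j * p k * Real.exp (-2 * |E j - E k| * T)
      = ∑ j, p j * ∑ k, p k * Real.exp (-2 * |E j - E k| * T) := by
        refine Finset.sum_congr rfl fun j _ => ?_
        rw [Finset.mul_sum]
        exact Finset.sum_congr rfl fun k _ => mul_assoc _ _ _
    _ ≤ ∑ j, p j * (2 * η ε / (1 - q)) :=
        Finset.sum_le_sum fun j _ => mul_le_mul_of_nonneg_left (inner j) (hp j)
    _ = 2 * η ε / (1 - q) := by rw [← Finset.sum_mul, hsum, one_mul]

/-- For energies E_j with probabilities p_j and η_ε the maximum probability in any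
energy interval of length ε: Σ_{j,k} p_j p_k e^{−2|E_j−E_k|T} ≤ 2η_{δ/(2T)}/(1−e^{−δ}),
and in particular (δ = 2) it is at most 2η_{1/T}/(1−e^{−2}). -/
theorem stmt_5 {n : ℕ} (E p : Fin n → ℝ) (hp : ∀ j, 0 ≤ p j) (hsum : ∑ j, p j = 1)
    (η : ℝ → ℝ)
    (hη : ∀ ε, η ε = ⨆ E0 : ℝ,
        ∑ j ∈ Finset.univ.filter (fun j => E0 ≤ E j ∧ E j ≤ E0 + ε), p j)
    (T δ : ℝ) (hT : 0 < T) (hδ : 0 < δ) :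
    (∑ j, ∑ k, p j * p k * Real.exp (-2 * |E j - E k| * T)
        ≤ 2 * η (δ / (2 * T)) / (1 - Real.exp (-δ))) ∧
    (∑ j, ∑ k, p j * p k * Real.exp (-2 * |E j - E k| * T)
        ≤ 2 * η (1 / T) / (1 - Real.exp (-2))) := by
  constructor
  · have h := key_aux E p hp hsum η hη T (δ / (2 * T)) hT (by positivity)
    have he : 2 * (δ / (2 * T)) * T = δ := by field_simp
    rwa [he] at h
  · have h := key_aux E p hp hsum η hη T (1 / T) hT (by positivity)
    have he : 2 * (1 / T) * T = 2 := by field_simp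
    rwa [he] at h
end

section
/- Let ρ and ω be density operators on a finite-dimensional Hilbert space with Tr(ω²) ≤ 1/d_eff, let P be a projector of rank K, and let ω_{L_T} be the Lorentzian time average of ρ_t = e^{−iHt}ρe^{iHt}. Then the Lorentzian-averaged distinguishability satisfies ⟨|Tr(P(ρ_t − ω))|⟩_T ≤ (5π/4)·√(K·Tr(ω_{L_T}²)) + √(K/d_eff), where ⟨·⟩_T is the uniform time average on [0,T]. -/
open scoped ComplexOrder Matrix
open MeasureTheory

private lemma stmt6_frob {d : ℕ} (A : Matrix (Fin d) (Fin d) ℂ) :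
    ((A * Aᴴ).trace).re = ∑ p : Fin d × Fin d, ‖A p.1 p.2‖ ^ 2 := by
  rw [Fintype.sum_prod_type]
  simp only [Matrix.trace, Matrix.diag_apply, Matrix.mul_apply, Matrix.conjTranspose_apply,
    Complex.re_sum, Complex.sq_norm]
  congr 1; funext j; congr 1; funext k
  rw [show star (A j k) = starRingEnd ℂ (A j k) from rfl, Complex.mul_conj]
  simp

private lemma stmt6_cs {d : ℕ} (A B : Matrix (Fin d) (Fin d) ℂ) :
    ‖(A * B).trace‖ ≤
      Real.sqrt (((A * Aᴴ).trace).re) * Real.sqrt (((B * Bᴴ).trace).re) := by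
  have h1 : (A * B).trace = ∑ p : Fin d × Fin d, A p.1 p.2 * B p.2 p.1 := by
    rw [Fintype.sum_prod_type]
    simp [Matrix.trace, Matrix.mul_apply]
  rw [h1, stmt6_frob, stmt6_frob]
  refine le_trans (norm_sum_le _ _) ?_
  have h2 : ∀ p : Fin d × Fin d, ‖A p.1 p.2 * B p.2 p.1‖
      = ‖A p.1 p.2‖ * ‖B p.2 p.1‖ := fun p => norm_mul _ _
  simp only [h2]
  have h3 := Finset.sum_mul_sq_le_sq_mul_sq Finset.univ
    (fun p : Fin d × Fin d => ‖A p.1 p.2‖)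
    (fun p : Fin d × Fin d => ‖B p.2 p.1‖)
  have h4 : ∑ p : Fin d × Fin d, ‖B p.2 p.1‖ ^ 2
      = ∑ p : Fin d × Fin d, ‖B p.1 p.2‖ ^ 2 :=
    Fintype.sum_equiv (Equiv.prodComm _ _) _ _ (fun p => rfl)
  calc ∑ p : Fin d × Fin d, ‖A p.1 p.2‖ * ‖B p.2 p.1‖
      = Real.sqrt ((∑ p : Fin d × Fin d,
          ‖A p.1 p.2‖ * ‖B p.2 p.1‖)^2) := by
        rw [Real.sqrt_sq (Finset.sum_nonneg fun p _ =>
          mul_nonneg (norm_nonneg _) (norm_nonneg _))]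
    _ ≤ Real.sqrt ((∑ p : Fin d × Fin d, ‖A p.1 p.2‖ ^ 2) *
          ∑ p : Fin d × Fin d, ‖B p.2 p.1‖ ^ 2) := Real.sqrt_le_sqrt h3
    _ = _ := by rw [h4, Real.sqrt_mul (Finset.sum_nonneg fun p _ => sq_nonneg _)]

private lemma stmt6_trace_nonneg {d : ℕ} {M : Matrix (Fin d) (Fin d) ℂ} (hM : M.PosSemidef) :
    0 ≤ M.trace := by
  exact hM.trace_nonneg

private lemma stmt6_trace_proj {d : ℕ} (P : Matrix (Fin d) (Fin d) ℂ) (hP : P * P = P)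
    (hPh : Pᴴ = P) (K : ℕ) (hK : P.rank = K) : P.trace = (K : ℂ) := by
  classical
  have hH : P.IsHermitian := hPh
  set U : Matrix (Fin d) (Fin d) ℂ :=
    (Matrix.IsHermitian.eigenvectorUnitary hH : Matrix (Fin d) (Fin d) ℂ) with hU
  set D : Matrix (Fin d) (Fin d) ℂ :=
    Matrix.diagonal (RCLike.ofReal ∘ hH.eigenvalues) with hD
  have hsp : P = U * D * star U := hH.spectral_theorem
  have hUU : star U * U = 1 := (Matrix.mem_unitaryGroup_iff').mp
    (Matrix.IsHermitian.eigenvectorUnitary hH).2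
  have hDD : D * D = D := by
    have h1 : U * (D * D) * star U = U * D * star U := by
      calc U * (D * D) * star U = (U * D * star U) * (U * D * star U) := by
            rw [show U * D * star U * (U * D * star U) = U * D * (star U * U) * D * star U by
              simp [Matrix.mul_assoc], hUU]
            simp [Matrix.mul_assoc]
        _ = U * D * star U := by rw [← hsp]; exact hP
    have h2 := congrArg (fun M => star U * M * U) h1
    simp only [Matrix.mul_assoc] at h2
    rw [show ∀ A : Matrix (Fin d) (Fin d) ℂ, star U * (U * A) = A from fun A => by
        rw [← Matrix.mul_assoc, hUU, Matrix.one_mul],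
      show ∀ A : Matrix (Fin d) (Fin d) ℂ, star U * (U * A) = A from fun A => by
        rw [← Matrix.mul_assoc, hUU, Matrix.one_mul]] at h2
    simp only [hUU, Matrix.mul_one] at h2; exact h2
  have heig : ∀ i, hH.eigenvalues i = 0 ∨ hH.eigenvalues i = 1 := by
    intro i
    have h := congrFun (congrFun hDD i) i
    rw [hD, Matrix.diagonal_mul_diagonal] at h
    simp only [Matrix.diagonal_apply_eq, Pi.mul_apply, Function.comp_apply] at h
    have h4 : hH.eigenvalues i * hH.eigenvalues i = hH.eigenvalues i := by exact_mod_cast h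
    have h5 : hH.eigenvalues i * (hH.eigenvalues i - 1) = 0 := by ring_nf; nlinarith [h4]
    rcases mul_eq_zero.mp h5 with h | h
    · exact Or.inl h
    · exact Or.inr (by linarith)
  have htr : P.trace = ∑ i, (hH.eigenvalues i : ℂ) := by
    conv_lhs => rw [hsp]
    rw [Matrix.trace_mul_cycle, hUU, Matrix.one_mul, hD, Matrix.trace_diagonal]
    rfl
  have hsum : ∑ i, hH.eigenvalues i = (K : ℝ) := by
    rw [← hK, hH.rank_eq_card_non_zero_eigs, Fintype.card_subtype]
    rw [← Finset.sum_filter_ne_zero (s := Finset.univ)]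
    rw [Finset.card_eq_sum_ones]
    push_cast
    refine Finset.sum_congr rfl fun i hi => ?_
    rcases heig i with h | h
    · exact absurd h (by simpa using hi)
    · simp [h]
  rw [htr, ← Complex.ofReal_sum, hsum]
  norm_cast

private lemma stmt6_lor_int {T : ℝ} (hT : 0 < T) :
    Integrable (fun t : ℝ => T / (T ^ 2 + (t - T / 2) ^ 2)) := by
  have h2 : Integrable (fun x : ℝ => (1 + (x / T) ^ 2)⁻¹) :=
    integrable_inv_one_add_sq.comp_div hT.ne'
  have h3 : Integrable (fun x : ℝ => (1 + ((x - T / 2) / T) ^ 2)⁻¹) :=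
    h2.comp_sub_right (T / 2)
  have h4 := h3.const_mul (1 / T)
  have heq : (fun t : ℝ => T / (T ^ 2 + (t - T / 2) ^ 2))
      = fun x : ℝ => 1 / T * (1 + ((x - T / 2) / T) ^ 2)⁻¹ := by
    funext x
    have hden : (0:ℝ) < T ^ 2 + (x - T / 2) ^ 2 := by positivity
    field_simp
  rw [heq]; exact h4

set_option maxHeartbeats 1000000 in
/-- Lorentzian bound on the time-averaged distinguishability:
⟨|Tr(P(ρ_t − ω))|⟩_T ≤ (5π/4)·√(K·Tr(ω_{L_T}²)) + √(K/d_eff), where ω is the dephased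
state with Tr(ω²) ≤ 1/d_eff, P is a rank-K projector and ω_{L_T} the Lorentzian average. -/
theorem stmt_6 {d : ℕ} (ρ ω P : Matrix (Fin d) (Fin d) ℂ) (E : Fin d → ℝ)
    (hρ : ρ.PosSemidef) (htr : ρ.trace = 1)
    (ρt : ℝ → Matrix (Fin d) (Fin d) ℂ)
    (hρt : ∀ t j k, ρt t j k =
        ρ j k * Complex.exp (-Complex.I * ((E j : ℂ) - (E k : ℂ)) * t))
    (hω : ∀ j k, ω j k = if E j = E k then ρ j k else 0)
    (hP : P * P = P) (hPh : Pᴴ = P) (K : ℕ) (hK : P.rank = K)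
    (deff : ℝ) (hdeff : 0 < deff) (hωp : ((ω * ω).trace).re ≤ 1 / deff)
    (T : ℝ) (hT : 0 < T)
    (ωLT : Matrix (Fin d) (Fin d) ℂ)
    (hωLT : ∀ j k, ωLT j k = (1 / (Real.pi : ℂ)) *
        ∫ t : ℝ, ρt t j k * ((T / (T ^ 2 + (t - T / 2) ^ 2) : ℝ) : ℂ)) :
    (1 / T) * ∫ t in (0 : ℝ)..T, ‖(P * (ρt t - ω)).trace‖
      ≤ (5 * Real.pi / 4) * Real.sqrt (K * ((ωLT * ωLTᴴ).trace).re)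
        + Real.sqrt (K / deff) := by
  classical
  have hπ : (0:ℝ) < Real.pi := Real.pi_pos
  set L : ℝ → ℝ := fun t => T / (T ^ 2 + (t - T / 2) ^ 2) with hL
  -- ρt is a unitary conjugation of ρ, hence PSD
  have hρtdef : ∀ t, ρt t =
      (Matrix.diagonal fun j => Complex.exp (-Complex.I * (E j : ℂ) * t)) * ρ *
      (Matrix.diagonal fun j => Complex.exp (-Complex.I * (E j : ℂ) * t))ᴴ := by
    intro t
    ext j k
    rw [Matrix.diagonal_conjTranspose, hρt t j k, Matrix.mul_diagonal, Matrix.diagonal_mul]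
    rw [show (star fun j => Complex.exp (-Complex.I * (E j : ℂ) * t)) k
        = star (Complex.exp (-Complex.I * (E k : ℂ) * t)) from rfl]
    rw [show star (Complex.exp (-Complex.I * (E k : ℂ) * t))
        = Complex.exp (starRingEnd ℂ (-Complex.I * (E k : ℂ) * t)) from
        (Complex.exp_conj _).symm]
    rw [show starRingEnd ℂ (-Complex.I * (E k : ℂ) * t) = Complex.I * (E k : ℂ) * t by
      simp [map_mul, Complex.conj_ofReal]]
    rw [show -Complex.I * ((E j : ℂ) - (E k : ℂ)) * t
        = -Complex.I * (E j : ℂ) * t + Complex.I * (E k : ℂ) * t by ring, Complex.exp_add]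
    ring
  have hpsd : ∀ t, (ρt t).PosSemidef := fun t => by
    rw [hρtdef t]; exact hρ.mul_mul_conjTranspose_same _
  -- P facts
  have htrP : P.trace = (K : ℂ) := stmt6_trace_proj P hP hPh K hK
  have hPsq : ((P * Pᴴ).trace).re = (K : ℝ) := by rw [hPh, hP, htrP]; simp
  -- ω facts
  have hωH : ωᴴ = ω := by
    ext j k
    rw [Matrix.conjTranspose_apply, hω, hω]
    have hρH : ∀ a b, star (ρ a b) = ρ b a := fun a b => by
      have := congrFun (congrFun hρ.1 b) a
      simpa [Matrix.conjTranspose_apply] using this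
    by_cases h : E j = E k
    · rw [if_pos h.symm, if_pos h, hρH]
    · rw [if_neg (fun hh : E k = E j => h hh.symm), if_neg h, star_zero]
  have hPω : ‖(P * ω).trace‖ ≤ Real.sqrt ((K : ℝ) / deff) := by
    refine le_trans (stmt6_cs P ω) ?_
    rw [hPsq]
    have h1 : ((ω * ωᴴ).trace).re ≤ 1 / deff := by rw [hωH]; exact hωp
    calc Real.sqrt (K : ℝ) * Real.sqrt (((ω * ωᴴ).trace).re)
        ≤ Real.sqrt (K : ℝ) * Real.sqrt (1 / deff) := by
          exact mul_le_mul_of_nonneg_left (Real.sqrt_le_sqrt h1) (Real.sqrt_nonneg _)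
      _ = Real.sqrt ((K : ℝ) / deff) := by
          rw [← Real.sqrt_mul (Nat.cast_nonneg K), mul_one_div]
  -- trace positivity
  have hPρt : ∀ t, 0 ≤ ((P * ρt t).trace) := by
    intro t
    have he : (P * ρt t * Pᴴ).trace = (P * ρt t).trace := by
      rw [hPh, Matrix.trace_mul_cycle, hP]
    rw [← he]
    exact stmt6_trace_nonneg ((hpsd t).mul_mul_conjTranspose_same P)
  set f : ℝ → ℝ := fun t => ((P * ρt t).trace).re with hf
  have hf0 : ∀ t, 0 ≤ f t := fun t => by
    have := (Complex.le_def.mp (hPρt t)).1; simpa using this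
  have habs : ∀ t, ‖(P * ρt t).trace‖ = f t := by
    intro t
    have h := Complex.le_def.mp (hPρt t)
    have him : ((P * ρt t).trace).im = 0 := by simpa using h.2.symm
    rw [Complex.norm_def, Complex.normSq_apply, him, mul_zero, add_zero,
      Real.sqrt_mul_self (hf0 t)]
  -- continuity
  have hcρt : ∀ j k, Continuous fun t : ℝ => ρt t j k := by
    intro j k
    have he : (fun t : ℝ => ρt t j k) = fun t : ℝ =>
        ρ j k * Complex.exp (-Complex.I * ((E j : ℂ) - (E k : ℂ)) * t) :=
      funext fun t => hρt t j k
    rw [he]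
    exact continuous_const.mul (Complex.continuous_exp.comp
      (continuous_const.mul Complex.continuous_ofReal))
  have htrexp : ∀ t, (P * ρt t).trace = ∑ p : Fin d × Fin d, P p.1 p.2 * ρt t p.2 p.1 := by
    intro t
    rw [Fintype.sum_prod_type]
    simp [Matrix.trace, Matrix.mul_apply]
  have hctr : Continuous fun t => (P * (ρt t)).trace := by
    have he : (fun t => (P * ρt t).trace)
        = fun t => ∑ p : Fin d × Fin d, P p.1 p.2 * ρt t p.2 p.1 := funext htrexp
    rw [he]
    exact continuous_finset_sum _ fun p _ => continuous_const.mul (hcρt p.2 p.1)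
  have hcf : Continuous f := Complex.continuous_re.comp hctr
  have hcL : Continuous L := continuous_const.div (by continuity)
    (fun t => by positivity)
  -- pointwise Lorentzian domination on [0, T]
  have hptw : ∀ t ∈ Set.Icc (0:ℝ) T, f t ≤ 5 * T / 4 * (f t * L t) := by
    intro t ht
    have h1 : (t - T/2)^2 ≤ (T/2)^2 := by
      apply sq_le_sq' <;> [linarith [ht.1, ht.2]; linarith [ht.1, ht.2]]
    have hden : (0:ℝ) < T^2 + (t - T/2)^2 := by positivity
    have h2 : 1 ≤ 5 * T / 4 * L t := by
      have he : 5 * T / 4 * L t = (5 * T^2 / 4) / (T^2 + (t - T/2)^2) := by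
        simp only [hL]; ring
      rw [he, le_div_iff₀ hden]
      nlinarith
    calc f t = f t * 1 := (mul_one _).symm
      _ ≤ f t * (5 * T / 4 * L t) := mul_le_mul_of_nonneg_left h2 (hf0 t)
      _ = 5 * T / 4 * (f t * L t) := by ring
  -- integrability of entries against Lorentzian
  have hFint : ∀ j k : Fin d, Integrable (fun t => ρt t j k * ((L t : ℝ) : ℂ)) := by
    intro j k
    refine Integrable.bdd_mul ((stmt6_lor_int hT).ofReal) ((hcρt j k).aestronglyMeasurable)
      (c := ‖ρ j k‖) (Filter.Eventually.of_forall fun t => ?_)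
    rw [hρt]
    rw [norm_mul]
    simp only [Complex.norm_exp]
    have hre : (-Complex.I * ((E j : ℂ) - (E k : ℂ)) * (t : ℂ)).re = 0 := by
      simp [Complex.mul_re, Complex.mul_im]
    rw [hre, Real.exp_zero, mul_one]
  have hGint : Integrable (fun t => (P * ρt t).trace * ((L t : ℝ) : ℂ)) := by
    have he : (fun t => (P * ρt t).trace * ((L t : ℝ) : ℂ))
        = fun t => ∑ p : Fin d × Fin d, P p.1 p.2 * (ρt t p.2 p.1 * ((L t : ℝ) : ℂ)) := by
      funext t
      rw [htrexp t, Finset.sum_mul]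
      exact Finset.sum_congr rfl fun p _ => by ring
    rw [he]
    exact integrable_finset_sum _ fun p _ => (hFint p.2 p.1).const_mul _
  -- the key integral identity
  have hkey : ∫ t : ℝ, (P * ρt t).trace * ((L t : ℝ) : ℂ)
      = (Real.pi : ℂ) * (P * ωLT).trace := by
    have h1 : ∫ t : ℝ, (P * ρt t).trace * ((L t : ℝ) : ℂ)
        = ∑ p : Fin d × Fin d, ∫ t : ℝ, P p.1 p.2 * (ρt t p.2 p.1 * ((L t : ℝ) : ℂ)) := by
      rw [← integral_finset_sum _ (fun p _ => (hFint p.2 p.1).const_mul _)]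
      congr 1; funext t
      rw [htrexp t, Finset.sum_mul]
      exact Finset.sum_congr rfl fun p _ => by ring
    have h2 : ∀ p : Fin d × Fin d, ∫ t : ℝ, P p.1 p.2 * (ρt t p.2 p.1 * ((L t : ℝ) : ℂ))
        = P p.1 p.2 * ((Real.pi : ℂ) * ωLT p.2 p.1) := by
      intro p
      rw [MeasureTheory.integral_const_mul]
      congr 1
      rw [hωLT, ← mul_assoc]
      rw [show (Real.pi : ℂ) * (1 / (Real.pi : ℂ)) = 1 by
        field_simp]
      rw [one_mul]
    rw [h1, Finset.sum_congr rfl (fun p _ => h2 p)]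
    have h3 : (P * ωLT).trace = ∑ p : Fin d × Fin d, P p.1 p.2 * ωLT p.2 p.1 := by
      rw [Fintype.sum_prod_type]
      simp [Matrix.trace, Matrix.mul_apply]
    rw [h3, Finset.mul_sum]
    exact Finset.sum_congr rfl fun p _ => by ring
  -- real-valued version
  have hfl : ∀ t, f t * L t = ((P * ρt t).trace * ((L t : ℝ) : ℂ)).re := by
    intro t; simp [hf, Complex.mul_re]
  have hflint : Integrable (fun t => f t * L t) := by
    have h := hGint.re
    refine h.congr (Filter.Eventually.of_forall fun t => ?_)
    simp only [RCLike.re_to_complex]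
    exact (hfl t).symm
  have hIR : ∫ t : ℝ, f t * L t = Real.pi * ((P * ωLT).trace).re := by
    calc ∫ t : ℝ, f t * L t
        = ∫ t : ℝ, ((P * ρt t).trace * ((L t : ℝ) : ℂ)).re := by
          congr 1; funext t; exact hfl t
      _ = (∫ t : ℝ, (P * ρt t).trace * ((L t : ℝ) : ℂ)).re := by
          have h := integral_re hGint
          simpa using h
      _ = ((Real.pi : ℂ) * (P * ωLT).trace).re := by rw [hkey]
      _ = Real.pi * ((P * ωLT).trace).re := by simp [Complex.mul_re]
  -- interval integral chain
  have hint1 : ∫ t in (0:ℝ)..T, f t ≤ ∫ t in (0:ℝ)..T, 5 * T / 4 * (f t * L t) :=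
    intervalIntegral.integral_mono_on hT.le (hcf.intervalIntegrable _ _)
      ((continuous_const.mul (hcf.mul hcL)).intervalIntegrable _ _) hptw
  have hint2 : ∫ t in (0:ℝ)..T, 5 * T / 4 * (f t * L t)
      = 5 * T / 4 * ∫ t in (0:ℝ)..T, f t * L t := intervalIntegral.integral_const_mul _ _
  have hint3 : ∫ t in (0:ℝ)..T, f t * L t ≤ ∫ t : ℝ, f t * L t := by
    rw [intervalIntegral.integral_of_le hT.le]
    refine setIntegral_le_integral hflint (Filter.Eventually.of_forall fun t => ?_)
    have hLt : 0 ≤ L t := by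
      simp only [hL]; positivity
    exact mul_nonneg (hf0 t) hLt
  have hmain : (1/T) * ∫ t in (0:ℝ)..T, f t
      ≤ (5 * Real.pi / 4) * ((P * ωLT).trace).re := by
    have hstep : ∫ t in (0:ℝ)..T, f t ≤ 5 * T / 4 * (Real.pi * ((P * ωLT).trace).re) := by
      refine le_trans hint1 ?_
      rw [hint2, ← hIR]
      exact mul_le_mul_of_nonneg_left hint3 (by linarith)
    calc (1/T) * ∫ t in (0:ℝ)..T, f t
        ≤ (1/T) * (5 * T / 4 * (Real.pi * ((P * ωLT).trace).re)) :=
          mul_le_mul_of_nonneg_left hstep (by positivity)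
      _ = (5 * Real.pi / 4) * ((P * ωLT).trace).re := by
          generalize ((P * ωLT).trace).re = x
          have hT' : T ≠ 0 := hT.ne'
          field_simp
  -- Cauchy–Schwarz for the Lorentzian average
  have hωcs : ((P * ωLT).trace).re ≤ Real.sqrt ((K : ℝ) * ((ωLT * ωLTᴴ).trace).re) := by
    refine le_trans (Complex.re_le_norm _) ?_
    refine le_trans (stmt6_cs P ωLT) ?_
    rw [hPsq, ← Real.sqrt_mul (Nat.cast_nonneg K)]
  -- pointwise bound for the integrand
  have habs2 : ∀ t, ‖(P * (ρt t - ω)).trace‖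
      ≤ f t + Real.sqrt ((K : ℝ) / deff) := by
    intro t
    rw [Matrix.mul_sub, Matrix.trace_sub]
    calc ‖(P * ρt t).trace - (P * ω).trace‖
        ≤ ‖(P * ρt t).trace‖ + ‖(P * ω).trace‖ := by
          simpa using norm_sub_le ((P * ρt t).trace) ((P * ω).trace)
      _ ≤ f t + Real.sqrt ((K : ℝ) / deff) := add_le_add (le_of_eq (habs t)) hPω
  -- integral of the LHS
  have hca : Continuous fun t => ‖(P * (ρt t - ω)).trace‖ := by
    apply continuous_norm.comp
    have he : (fun t => (P * (ρt t - ω)).trace)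
        = fun t => (P * ρt t).trace - (P * ω).trace := by
      funext t; rw [Matrix.mul_sub, Matrix.trace_sub]
    rw [he]; exact hctr.sub continuous_const
  have hLHS : ∫ t in (0:ℝ)..T, ‖(P * (ρt t - ω)).trace‖
      ≤ (∫ t in (0:ℝ)..T, f t) + T * Real.sqrt ((K : ℝ) / deff) := by
    calc ∫ t in (0:ℝ)..T, ‖(P * (ρt t - ω)).trace‖
        ≤ ∫ t in (0:ℝ)..T, (f t + Real.sqrt ((K : ℝ) / deff)) :=
          intervalIntegral.integral_mono_on hT.le (hca.intervalIntegrable _ _)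
            ((hcf.add continuous_const).intervalIntegrable _ _) (fun t _ => habs2 t)
      _ = (∫ t in (0:ℝ)..T, f t) + T * Real.sqrt ((K : ℝ) / deff) := by
          rw [intervalIntegral.integral_add (hcf.intervalIntegrable _ _)
            (continuous_const.intervalIntegrable _ _), intervalIntegral.integral_const]
          simp
  -- final assembly
  calc (1 / T) * ∫ t in (0 : ℝ)..T, ‖(P * (ρt t - ω)).trace‖
      ≤ (1 / T) * ((∫ t in (0:ℝ)..T, f t) + T * Real.sqrt ((K : ℝ) / deff)) :=
        mul_le_mul_of_nonneg_left hLHS (by positivity)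
    _ = (1/T) * (∫ t in (0:ℝ)..T, f t) + Real.sqrt ((K : ℝ) / deff) := by
        generalize (∫ t in (0:ℝ)..T, f t) = y
        generalize Real.sqrt ((K : ℝ) / deff) = c
        have hT' : T ≠ 0 := hT.ne'
        field_simp
    _ ≤ (5 * Real.pi / 4) * ((P * ωLT).trace).re + Real.sqrt ((K : ℝ) / deff) :=
        add_le_add_left hmain _
    _ ≤ (5 * Real.pi / 4) * Real.sqrt ((K : ℝ) * ((ωLT * ωLTᴴ).trace).re)
          + Real.sqrt ((K : ℝ) / deff) :=
        add_le_add_left (mul_le_mul_of_nonneg_left hωcs (by positivity)) _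
end

section
/- For a pure state with Gaussian energy distribution of standard deviation σ_E (continuous approximation), Tr(ω_{L_T}²) = (T/π)∫_{−∞}^{∞} e^{−4σ_E²t²}/(T² + t²) dt = e^{4σ_E²T²}(1 − erf(2σ_E T)). -/
open MeasureTheory Set Real



lemma aux_exp_Ioi {a : ℝ} (ha : 0 < a) :
    ∫ s in Ioi (0:ℝ), Real.exp (-(a*s)) = a⁻¹ := by
  have h := integral_comp_mul_left_Ioi (fun x => Real.exp (-x)) 0 ha
  simp only [mul_zero, integral_exp_neg_Ioi, neg_zero, Real.exp_zero, smul_eq_mul,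
    mul_one] at h
  exact h

lemma aux_gauss_tail {a : ℝ} (ha : 0 ≤ a) :
    ∫ v in Ioi a, Real.exp (-v^2)
      = Real.sqrt Real.pi / 2 - ∫ t in (0:ℝ)..a, Real.exp (-t^2) := by
  have hint : Integrable (fun v : ℝ => Real.exp (-v^2)) := by
    simpa using integrable_exp_neg_mul_sq (one_pos)
  have h0 : ∫ v in Ioi (0:ℝ), Real.exp (-v^2) = Real.sqrt Real.pi / 2 := by
    have := integral_gaussian_Ioi 1
    simpa using this
  have hsplit : (∫ v in Ioc (0:ℝ) a, Real.exp (-v^2)) + (∫ v in Ioi a, Real.exp (-v^2))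
      = ∫ v in Ioi (0:ℝ), Real.exp (-v^2) := by
    rw [← setIntegral_union (Ioc_disjoint_Ioi le_rfl) measurableSet_Ioi
      hint.integrableOn hint.integrableOn, Ioc_union_Ioi_eq_Ioi ha]
  rw [intervalIntegral.integral_of_le ha]
  linarith [hsplit, h0]

lemma aux_affine_Ioi (g : ℝ → ℝ) (b c A : ℝ) (hb : 0 < b) :
    ∫ u in Ioi A, g (b * u + c) = b⁻¹ * ∫ v in Ioi (b * A + c), g v := by
  have himg : (fun u : ℝ => b * u + c) '' Ioi A = Ioi (b * A + c) := by
    ext y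
    simp only [mem_image, mem_Ioi]
    constructor
    · rintro ⟨x, hx, rfl⟩; nlinarith
    · intro hy
      exact ⟨(y - c)/b, by rw [lt_div_iff₀ hb]; nlinarith, by field_simp; ring⟩
  have hder : ∀ x ∈ Ioi A, HasDerivWithinAt (fun u : ℝ => b * u + c) b (Ioi A) x := by
    intro x _
    simpa using (((hasDerivAt_id x).const_mul b).add_const c).hasDerivWithinAt
  have hinj : InjOn (fun u : ℝ => b * u + c) (Ioi A) := by
    intro x _ y _ h
    simp only at h
    exact mul_left_cancel₀ hb.ne' (by linarith)
  have h := integral_image_eq_integral_abs_deriv_smul measurableSet_Ioi hder hinj g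
  rw [himg] at h
  simp only [smul_eq_mul, abs_of_pos hb] at h
  rw [h, integral_const_mul, inv_mul_cancel_left₀ hb.ne']

lemma aux_sq_subst (g : ℝ → ℝ) {A : ℝ} (hA : 0 < A) :
    ∫ s in Ioi (0:ℝ), g s = ∫ w in Ioi A, (2*w) * g (w^2 - A^2) := by
  have himg : (fun w : ℝ => w^2 - A^2) '' Ioi A = Ioi 0 := by
    ext y
    simp only [mem_image, mem_Ioi]
    constructor
    · rintro ⟨x, hx, rfl⟩; nlinarith
    · intro hy
      refine ⟨Real.sqrt (y + A^2), ?_, ?_⟩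
      · exact (Real.lt_sqrt (by positivity)).mpr (by linarith)
      · rw [Real.sq_sqrt (by positivity)]; ring
  have hder : ∀ x ∈ Ioi A, HasDerivWithinAt (fun w : ℝ => w^2 - A^2) (2*x) (Ioi A) x := by
    intro x _
    simpa using ((hasDerivAt_pow 2 x).sub_const (A^2)).hasDerivWithinAt
  have hinj : InjOn (fun w : ℝ => w^2 - A^2) (Ioi A) := by
    intro x hx y hy h
    simp only [mem_Ioi] at hx hy
    simp only [sub_left_inj] at h
    nlinarith [sq_nonneg (x - y), sq_nonneg (x + y)]
  have h := integral_image_eq_integral_abs_deriv_smul measurableSet_Ioi hder hinj g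
  rw [himg] at h
  rw [h]
  refine setIntegral_congr_fun measurableSet_Ioi fun w hw => ?_
  simp only [mem_Ioi] at hw
  rw [smul_eq_mul, abs_of_pos (by nlinarith)]


lemma part2 (σ T : ℝ) (hσ : 0 < σ) (hT : 0 < T) :
    (T / Real.pi) * (∫ t : ℝ, Real.exp (-4 * σ ^ 2 * t ^ 2) / (T ^ 2 + t ^ 2)) =
      Real.exp (4 * σ ^ 2 * T ^ 2) *
        (1 - (2 / Real.sqrt Real.pi) * ∫ v in (0:ℝ)..(2 * σ * T), Real.exp (-v ^ 2)) := by
  set F : ℝ → ℝ → ℝ := fun t s => Real.exp (-4 * σ ^ 2 * t ^ 2) * Real.exp (-((T^2+t^2)*s))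
    with hF
  have step1 : ∀ t : ℝ, Real.exp (-4 * σ ^ 2 * t ^ 2) / (T ^ 2 + t ^ 2)
      = ∫ s in Ioi (0:ℝ), F t s := by
    intro t
    rw [hF]
    simp only
    rw [integral_const_mul, aux_exp_Ioi (by positivity : (0:ℝ) < T^2+t^2), div_eq_mul_inv]
  have hInt : Integrable (Function.uncurry F) (volume.prod (volume.restrict (Ioi 0))) := by
    have hg : Integrable (fun z : ℝ × ℝ =>
        Real.exp (-4 * σ ^ 2 * z.1 ^ 2) * Real.exp (-(T^2 * z.2)))
        (volume.prod (volume.restrict (Ioi 0))) := by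
      have h1 : Integrable (fun t : ℝ => Real.exp (-4 * σ ^ 2 * t ^ 2)) := by
        have := integrable_exp_neg_mul_sq (show (0:ℝ) < 4*σ^2 by positivity)
        exact this.congr (Filter.Eventually.of_forall fun x => by ring_nf)
      have h2 : Integrable (fun s : ℝ => Real.exp (-(T^2 * s))) (volume.restrict (Ioi 0)) := by
        have := exp_neg_integrableOn_Ioi 0 (show (0:ℝ) < T^2 by positivity)
        exact this.congr_fun (fun x _ => by simp only [neg_mul]) measurableSet_Ioi
      exact h1.mul_prod h2
    have hae : ∀ᵐ z : ℝ × ℝ ∂(volume.prod (volume.restrict (Ioi 0))), z.2 ∈ Ioi (0:ℝ) := by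
      rw [ae_iff]
      have hset : {z : ℝ × ℝ | ¬ z.2 ∈ Ioi (0:ℝ)} = (univ : Set ℝ) ×ˢ (Ioi (0:ℝ))ᶜ := by
        ext z; simp
      rw [hset, Measure.prod_prod, Measure.restrict_apply measurableSet_Ioi.compl]
      rw [show (Ioi (0:ℝ))ᶜ ∩ Ioi 0 = ∅ by ext x; simp]
      simp
    refine Integrable.mono' hg ?_ ?_
    · apply Continuous.aestronglyMeasurable
      fun_prop
    · filter_upwards [hae] with z hz
      have hz' : (0:ℝ) < z.2 := hz
      show ‖Real.exp (-4 * σ ^ 2 * z.1 ^ 2) * Real.exp (-((T^2+z.1^2)*z.2))‖ ≤ _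
      rw [Real.norm_eq_abs, abs_of_nonneg (mul_nonneg (Real.exp_nonneg _) (Real.exp_nonneg _))]
      gcongr
      nlinarith [mul_nonneg (sq_nonneg z.1) hz'.le]
  calc (T / Real.pi) * (∫ t : ℝ, Real.exp (-4 * σ ^ 2 * t ^ 2) / (T ^ 2 + t ^ 2))
      = (T / Real.pi) * ∫ t : ℝ, ∫ s in Ioi (0:ℝ), F t s := by
        congr 1; exact integral_congr_ae (Filter.Eventually.of_forall step1)
    _ = (T / Real.pi) * ∫ s in Ioi (0:ℝ), ∫ t : ℝ, F t s := by
        rw [integral_integral_swap hInt]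
    _ = (T / Real.pi) * ∫ s in Ioi (0:ℝ),
          Real.exp (-(T^2*s)) * Real.sqrt (Real.pi/(4*σ^2+s)) := by
        congr 1
        refine setIntegral_congr_fun measurableSet_Ioi fun s hs => ?_
        have hs' : (0:ℝ) < s := hs
        have hpt : ∀ t : ℝ, F t s
            = Real.exp (-(T^2*s)) * Real.exp (-(4*σ^2+s)*t^2) := by
          intro t
          rw [hF]
          simp only
          rw [← Real.exp_add, ← Real.exp_add]
          ring_nf
        simp only [hpt]
        rw [integral_const_mul, integral_gaussian]
    _ = (T / Real.pi) * ∫ w in Ioi (2*σ), (2*w) *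
          (Real.exp (-(T^2*(w^2-(2*σ)^2))) * Real.sqrt (Real.pi/(4*σ^2+(w^2-(2*σ)^2)))) := by
        congr 1
        exact aux_sq_subst _ (by positivity)
    _ = (T / Real.pi) * ∫ w in Ioi (2*σ),
          (2 * Real.sqrt Real.pi * Real.exp (4*σ^2*T^2)) * Real.exp (-(T*w)^2) := by
        congr 1
        refine setIntegral_congr_fun measurableSet_Ioi fun w hw => ?_
        have hw' : (2:ℝ)*σ < w := hw
        have hw0 : (0:ℝ) < w := lt_trans (by positivity) hw'
        have h1 : 4*σ^2+(w^2-(2*σ)^2) = w^2 := by ring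
        rw [h1]
        have h2 : Real.sqrt (Real.pi/w^2) = Real.sqrt Real.pi / w := by
          rw [Real.sqrt_div Real.pi_pos.le, Real.sqrt_sq hw0.le]
        rw [h2]
        have h3 : Real.exp (-(T^2*(w^2-(2*σ)^2)))
            = Real.exp (4*σ^2*T^2) * Real.exp (-(T*w)^2) := by
          rw [← Real.exp_add]; ring_nf
        rw [h3]
        field_simp
    _ = (T / Real.pi) * ((2 * Real.sqrt Real.pi * Real.exp (4*σ^2*T^2)) *
          (T⁻¹ * ∫ v in Ioi (2*σ*T), Real.exp (-v^2))) := by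
        rw [integral_const_mul]
        congr 2
        have := integral_comp_mul_left_Ioi (fun v => Real.exp (-v^2)) (2*σ) hT
        simp only [smul_eq_mul] at this
        rw [show (2:ℝ)*σ*T = T*(2*σ) from by ring]
        exact this
    _ = Real.exp (4 * σ ^ 2 * T ^ 2) *
        (1 - (2 / Real.sqrt Real.pi) * ∫ v in (0:ℝ)..(2 * σ * T), Real.exp (-v ^ 2)) := by
        rw [aux_gauss_tail (by positivity : (0:ℝ) ≤ 2*σ*T)]
        have hQ : Real.sqrt Real.pi * Real.sqrt Real.pi = Real.pi :=
          Real.mul_self_sqrt Real.pi_pos.le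
        have hQ0 : Real.sqrt Real.pi ≠ 0 := by positivity
        set X := ∫ t in (0:ℝ)..(2*σ*T), Real.exp (-t^2) with hX
        set E := Real.exp (4*σ^2*T^2) with hE
        field_simp
        linear_combination (E * Real.sqrt Real.pi - 2 * E * X) * hQ


lemma part1 (σ T : ℝ) (hσ : 0 < σ) (hT : 0 < T) :
    (∫ E : ℝ, ∫ E' : ℝ, 1 / (Real.sqrt (2 * Real.pi) * σ) * Real.exp (-E ^ 2 / (2 * σ ^ 2)) *
        (1 / (Real.sqrt (2 * Real.pi) * σ) * Real.exp (-E' ^ 2 / (2 * σ ^ 2))) *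
        Real.exp (-2 * |E - E'| * T)) =
      Real.exp (4 * σ ^ 2 * T ^ 2) *
        (1 - (2 / Real.sqrt Real.pi) * ∫ v in (0:ℝ)..(2 * σ * T), Real.exp (-v ^ 2)) := by
  set C : ℝ := 1 / (Real.sqrt (2 * Real.pi) * σ) with hC
  have hC0 : 0 < C := by rw [hC]; positivity
  set k : ℝ → ℝ → ℝ := fun E u =>
    C * Real.exp (-E ^ 2 / (2 * σ ^ 2)) * (C * Real.exp (-(E - u) ^ 2 / (2 * σ ^ 2))) *
      Real.exp (-2 * |u| * T) with hk
  -- step 1 : inner substitution E' ↦ E - u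
  have step1 : ∀ E : ℝ,
      (∫ E' : ℝ, C * Real.exp (-E ^ 2 / (2 * σ ^ 2)) *
        (C * Real.exp (-E' ^ 2 / (2 * σ ^ 2))) * Real.exp (-2 * |E - E'| * T))
      = ∫ u : ℝ, k E u := by
    intro E
    have hfe : (fun E' : ℝ => C * Real.exp (-E ^ 2 / (2 * σ ^ 2)) *
        (C * Real.exp (-E' ^ 2 / (2 * σ ^ 2))) * Real.exp (-2 * |E - E'| * T))
        = fun E' : ℝ => (fun u => k E u) (E - E') := by
      funext E'
      rw [hk]
      simp only [sub_sub_cancel]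
    rw [hfe]
    exact integral_sub_left_eq_self (fun u => k E u) volume E
  -- integrability on the product space
  have hkey : ∀ x y : ℝ, -x^2/(2*σ^2) + -(x-y)^2/(2*σ^2)
      ≤ -(1/(8*σ^2))*x^2 + -(1/(8*σ^2))*y^2 := by
    intro x y
    have hdiff : (-(1/(8*σ^2))*x^2 + -(1/(8*σ^2))*y^2)
        - (-x^2/(2*σ^2) + -(x-y)^2/(2*σ^2)) = (7*x^2 - 8*x*y + 3*y^2)/(8*σ^2) := by
      field_simp
      ring
    have h7 : (0:ℝ) ≤ (7*x^2 - 8*x*y + 3*y^2)/(8*σ^2) :=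
      div_nonneg (by nlinarith [sq_nonneg (2*x - y), sq_nonneg (x - y), sq_nonneg x])
        (by positivity)
    linarith
  have hkval : ∀ E u : ℝ, k E u
      = C^2 * Real.exp (-E^2/(2*σ^2) + -(E-u)^2/(2*σ^2) + -2*|u| * T) := by
    intro E u
    rw [hk]
    simp only
    rw [Real.exp_add, Real.exp_add]
    ring
  have hInt : Integrable (Function.uncurry k) (volume.prod volume) := by
    have hg : Integrable (fun z : ℝ × ℝ =>
        (C^2 * Real.exp (-(1/(8*σ^2)) * z.1^2)) * Real.exp (-(1/(8*σ^2)) * z.2^2))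
        (volume.prod volume) := by
      have h1 : Integrable (fun t : ℝ => C^2 * Real.exp (-(1/(8*σ^2)) * t^2)) :=
        (integrable_exp_neg_mul_sq (show (0:ℝ) < 1/(8*σ^2) by positivity)).const_mul _
      have h2 : Integrable (fun t : ℝ => Real.exp (-(1/(8*σ^2)) * t^2)) :=
        integrable_exp_neg_mul_sq (show (0:ℝ) < 1/(8*σ^2) by positivity)
      exact h1.mul_prod h2
    refine Integrable.mono' hg ?_ (Filter.Eventually.of_forall fun z => ?_)
    · apply Continuous.aestronglyMeasurable
      fun_prop
    · show ‖k z.1 z.2‖ ≤ _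
      rw [hkval]
      rw [Real.norm_eq_abs, abs_of_nonneg (by positivity)]
      have hrhs : C^2 * Real.exp (-(1/(8*σ^2)) * z.1^2) * Real.exp (-(1/(8*σ^2)) * z.2^2)
          = C^2 * Real.exp (-(1/(8*σ^2)) * z.1^2 + -(1/(8*σ^2)) * z.2^2) := by
        rw [Real.exp_add]; ring
      rw [hrhs]
      apply mul_le_mul_of_nonneg_left _ (by positivity : (0:ℝ) ≤ C^2)
      apply Real.exp_le_exp.mpr
      have habs : (0:ℝ) ≤ 2 * |z.2| * T := by positivity
      have := hkey z.1 z.2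
      linarith
  -- swap and compute the inner integral over E
  have step4 : ∀ u : ℝ, (∫ E : ℝ, k E u)
      = (C^2 * (σ * Real.sqrt Real.pi)) *
          (Real.exp (-u^2/(4*σ^2)) * Real.exp (-2*|u| * T)) := by
    intro u
    have hexp : ∀ E : ℝ, k E u
        = (C^2 * (Real.exp (-u^2/(4*σ^2)) * Real.exp (-2*|u| * T))) *
            Real.exp (-(1/σ^2)*(E - u/2)^2) := by
      intro E
      rw [hkval]
      rw [show -E^2/(2*σ^2) + -(E-u)^2/(2*σ^2) + -2*|u| * T
          = (-u^2/(4*σ^2)) + (-(1/σ^2)*(E - u/2)^2) + -2*|u| * T by field_simp; ring]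
      rw [Real.exp_add, Real.exp_add]
      ring
    simp only [hexp]
    rw [integral_const_mul]
    rw [integral_sub_right_eq_self (fun x => Real.exp (-(1/σ^2)*x^2)) (u/2)]
    rw [integral_gaussian]
    rw [show Real.pi / (1/σ^2) = Real.pi * σ^2 by field_simp]
    rw [Real.sqrt_mul Real.pi_pos.le, Real.sqrt_sq hσ.le]
    ring
  calc (∫ E : ℝ, ∫ E' : ℝ, C * Real.exp (-E ^ 2 / (2 * σ ^ 2)) *
        (C * Real.exp (-E' ^ 2 / (2 * σ ^ 2))) * Real.exp (-2 * |E - E'| * T))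
      = ∫ E : ℝ, ∫ u : ℝ, k E u := by
        exact integral_congr_ae (Filter.Eventually.of_forall step1)
    _ = ∫ u : ℝ, ∫ E : ℝ, k E u := integral_integral_swap hInt
    _ = ∫ u : ℝ, (C^2 * (σ * Real.sqrt Real.pi)) *
          (Real.exp (-u^2/(4*σ^2)) * Real.exp (-2*|u| * T)) := by
        exact integral_congr_ae (Filter.Eventually.of_forall step4)
    _ = (C^2 * (σ * Real.sqrt Real.pi)) *
          ∫ u : ℝ, Real.exp (-u^2/(4*σ^2)) * Real.exp (-2*|u| * T) := integral_const_mul _ _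
    _ = (C^2 * (σ * Real.sqrt Real.pi)) *
          (2 * ∫ x in Ioi (0:ℝ), Real.exp (-x^2/(4*σ^2)) * Real.exp (-2*x*T)) := by
        congr 1
        have hfn : (fun u : ℝ => Real.exp (-u^2/(4*σ^2)) * Real.exp (-2*|u| * T))
            = fun u : ℝ => (fun x : ℝ => Real.exp (-x^2/(4*σ^2)) * Real.exp (-2*x*T)) |u| := by
          funext u
          simp only [sq_abs]
        rw [hfn]
        exact integral_comp_abs (f := fun x : ℝ => Real.exp (-x^2/(4*σ^2)) * Real.exp (-2*x*T))
    _ = (C^2 * (σ * Real.sqrt Real.pi)) *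
          (2 * (Real.exp (4*σ^2*T^2) *
            ∫ x in Ioi (0:ℝ), Real.exp (-(1/(2*σ) * x + 2*σ*T)^2))) := by
        congr 2
        rw [← integral_const_mul]
        refine setIntegral_congr_fun measurableSet_Ioi fun x _ => ?_
        rw [← Real.exp_add, ← Real.exp_add]
        congr 1
        field_simp
        ring
    _ = Real.exp (4 * σ ^ 2 * T ^ 2) *
        (1 - (2 / Real.sqrt Real.pi) * ∫ v in (0:ℝ)..(2 * σ * T), Real.exp (-v ^ 2)) := by
        rw [aux_affine_Ioi (fun v => Real.exp (-v^2)) (1/(2*σ)) (2*σ*T) 0 (by positivity)]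
        rw [show 1/(2*σ) * 0 + 2*σ*T = 2*σ*T by ring]
        rw [aux_gauss_tail (by positivity : (0:ℝ) ≤ 2*σ*T)]
        rw [hC]
        have hQ : Real.sqrt Real.pi * Real.sqrt Real.pi = Real.pi :=
          Real.mul_self_sqrt Real.pi_pos.le
        have h2π : Real.sqrt (2*Real.pi) * Real.sqrt (2*Real.pi) = 2*Real.pi :=
          Real.mul_self_sqrt (by positivity)
        have hQ0 : Real.sqrt Real.pi ≠ 0 := by positivity
        have h2π0 : Real.sqrt (2*Real.pi) ≠ 0 := by positivity
        set X := ∫ t in (0:ℝ)..(2*σ*T), Real.exp (-t^2) with hX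
        set E := Real.exp (4*σ^2*T^2) with hE
        have hE' : Real.exp (4*σ^2*T^2) = E := rfl
        have h2s : Real.sqrt 2 ^ 2 = 2 := Real.sq_sqrt (by norm_num)
        field_simp
        linear_combination (2*E*X - Real.sqrt Real.pi*E) * (h2π - 2*hQ)

/-- For a Gaussian energy distribution of standard deviation σ (continuous limit),
Tr(ω_{L_T}²) = ∬ p(E)p(E′)e^{−2|E−E′|T} dE dE′ = (T/π)∫ e^{−4σ²t²}/(T²+t²) dt
             = e^{4σ²T²}(1 − erf(2σT)). -/
theorem stmt_9 (σ T : ℝ) (hσ : 0 < σ) (hT : 0 < T) (p : ℝ → ℝ)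
    (hp : ∀ E, p E = (1 / (Real.sqrt (2 * Real.pi) * σ)) * Real.exp (-E ^ 2 / (2 * σ ^ 2)))
    (erf : ℝ → ℝ)
    (herf : ∀ x, erf x = (2 / Real.sqrt Real.pi) * ∫ t in (0 : ℝ)..x, Real.exp (-t ^ 2)) :
    (∫ E : ℝ, ∫ E' : ℝ, p E * p E' * Real.exp (-2 * |E - E'| * T)) =
      (T / Real.pi) * ∫ t : ℝ, Real.exp (-4 * σ ^ 2 * t ^ 2) / (T ^ 2 + t ^ 2) ∧
    (T / Real.pi) * (∫ t : ℝ, Real.exp (-4 * σ ^ 2 * t ^ 2) / (T ^ 2 + t ^ 2)) =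
      Real.exp (4 * σ ^ 2 * T ^ 2) * (1 - erf (2 * σ * T)) := by
  have h2 := part2 σ T hσ hT
  have h1 := part1 σ T hσ hT
  constructor
  · simp only [hp]
    exact h1.trans h2.symm
  · rw [herf]
    exact h2
end

section
/- Slow equilibration, persistence part: let |ψ(t)⟩ be a pure state with energy standard deviation σ_E and effective dimension d_eff, let ε > 0, τ = 2ε/σ_E, and let P be the projector onto span{|ψ(jτ)⟩ : j = 0,...,K−1}. Then for all t ∈ [0, (K−1/2)τ], Tr(P ρ_t) ≥ 1 − ε², and hence D_P(ρ_t, ω) ≥ 1 − ε² − √(K/d_eff). -/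
open scoped Matrix

/-- Cauchy–Schwarz for complex sums. -/
lemma cs_abs_sq {ι : Type*} [Fintype ι] (f g : ι → ℂ) :
    ‖∑ i, f i * g i‖ ^ 2 ≤
      (∑ i, ‖f i‖ ^ 2) * (∑ i, ‖g i‖ ^ 2) := by
  have h1 : ‖∑ i, f i * g i‖ ≤
      ∑ i, ‖f i‖ * ‖g i‖ := by
    refine (norm_sum_le _ _).trans_eq ?_
    simp [norm_mul]
  have h2 := Finset.sum_mul_sq_le_sq_mul_sq Finset.univ
    (fun i => ‖f i‖) (fun i => ‖g i‖)
  calc ‖∑ i, f i * g i‖ ^ 2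
      ≤ (∑ i, ‖f i‖ * ‖g i‖) ^ 2 :=
        pow_le_pow_left₀ (norm_nonneg _) h1 2
    _ ≤ _ := h2

/-- Trace of an idempotent complex matrix equals its rank. -/
lemma trace_idem_eq_rank {n : ℕ} (P : Matrix (Fin n) (Fin n) ℂ) (hP : P * P = P) :
    P.trace = (P.rank : ℂ) := by
  have hf : P.mulVecLin ∘ₗ P.mulVecLin = P.mulVecLin := by
    rw [← Matrix.mulVecLin_mul, hP]
  obtain ⟨p, hp⟩ := (LinearMap.isProj_iff_isIdempotentElem P.mulVecLin).mpr hf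
  have hrange : p = LinearMap.range P.mulVecLin := by
    apply le_antisymm
    · intro x hx; exact ⟨x, hp.map_id x hx⟩
    · rintro x ⟨y, rfl⟩; exact hp.map_mem y
  have ht := hp.trace
  rw [LinearMap.trace_eq_matrix_trace ℂ (Pi.basisFun ℂ (Fin n)),
    LinearMap.toMatrix_eq_toMatrix', ← Matrix.toLin'_apply', LinearMap.toMatrix'_toLin'] at ht
  rw [ht, hrange]
  rfl

/-- real part of trace of square of a Hermitian matrix is the Frobenius norm squared. -/
lemma trace_sq_herm {n : ℕ} (A : Matrix (Fin n) (Fin n) ℂ) (hA : Aᴴ = A) :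
    ((A * A).trace).re = ∑ j, ∑ k, ‖A j k‖ ^ 2 := by
  have key : ∀ j k : Fin n, A j k * A k j = ((‖A j k‖ ^ 2 : ℝ) : ℂ) := by
    intro j k
    have h : A k j = starRingEnd ℂ (A j k) := by
      conv_lhs => rw [← hA]
      simp [Matrix.conjTranspose_apply]
    rw [h, Complex.mul_conj]
    norm_cast
    exact (Complex.sq_norm _).symm
  have : (A * A).trace = ((∑ j, ∑ k, ‖A j k‖ ^ 2 : ℝ) : ℂ) := by
    rw [Matrix.trace]
    push_cast
    refine Finset.sum_congr rfl fun j _ => ?_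
    rw [Matrix.diag_apply, Matrix.mul_apply]
    exact Finset.sum_congr rfl fun k _ => by rw [key j k]; norm_cast
  rw [this, Complex.ofReal_re]

lemma survival {n : ℕ} (c : Fin n → ℂ) (E : Fin n → ℝ)
    (hnorm : ∑ j, ‖c j‖ ^ 2 = 1)
    (σE : ℝ)
    (hσ : σE ^ 2 = ∑ j, ‖c j‖ ^ 2 * (E j) ^ 2
        - (∑ j, ‖c j‖ ^ 2 * E j) ^ 2) (s : ℝ) :
    1 - σE ^ 2 * s ^ 2 ≤ ‖∑ j, ((‖c j‖ ^ 2 : ℝ) : ℂ)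
      * Complex.exp (-Complex.I * (E j : ℂ) * (s : ℂ))‖ ^ 2 := by
  set p : Fin n → ℝ := fun j => ‖c j‖ ^ 2 with hp
  have hpnn : ∀ j, 0 ≤ p j := fun j => sq_nonneg _
  set μ : ℝ := ∑ j, p j * E j with hμ
  set S : ℂ := ∑ j, ((p j : ℝ) : ℂ) * Complex.exp (-Complex.I * (E j : ℂ) * (s : ℂ)) with hS
  have hTre : (Complex.exp (Complex.I * (μ : ℂ) * (s : ℂ)) * S).re
      = ∑ j, p j * Real.cos ((μ - E j) * s) := by
    rw [hS, Finset.mul_sum, Complex.re_sum]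
    refine Finset.sum_congr rfl fun j _ => ?_
    have h1 : Complex.exp (Complex.I * (μ : ℂ) * (s : ℂ)) *
        (((p j : ℝ) : ℂ) * Complex.exp (-Complex.I * (E j : ℂ) * (s : ℂ)))
        = ((p j : ℝ) : ℂ) * Complex.exp ((((μ - E j) * s : ℝ) : ℂ) * Complex.I) := by
      rw [mul_left_comm, ← Complex.exp_add]
      congr 1
      push_cast
      ring
    rw [h1, Complex.re_ofReal_mul, Complex.exp_ofReal_mul_I_re]
  have hsum : ∑ j, p j * (1 - ((μ - E j) * s) ^ 2 / 2) = 1 - σE ^ 2 * s ^ 2 / 2 := by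
    have h1 : ∀ j, p j * (1 - ((μ - E j) * s) ^ 2 / 2)
        = p j - s ^ 2 / 2 * (μ ^ 2 * p j - 2 * μ * (p j * E j) + p j * E j ^ 2) := by
      intro j; ring
    simp_rw [h1]
    rw [Finset.sum_sub_distrib, ← Finset.mul_sum, Finset.sum_add_distrib,
      Finset.sum_sub_distrib, ← Finset.mul_sum, ← Finset.mul_sum]
    have h2 : ∑ j, p j = 1 := hnorm
    have h3 : ∑ j, p j * E j ^ 2 = σE ^ 2 + μ ^ 2 := by
      have := hσ
      linarith
    rw [h2, ← hμ, h3]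
    ring
  have hle : ∑ j, p j * (1 - ((μ - E j) * s) ^ 2 / 2) ≤ ∑ j, p j * Real.cos ((μ - E j) * s) :=
    Finset.sum_le_sum fun j _ =>
      mul_le_mul_of_nonneg_left (Real.one_sub_sq_div_two_le_cos) (hpnn j)
  have habs : (Complex.exp (Complex.I * (μ : ℂ) * (s : ℂ)) * S).re ≤ ‖S‖ := by
    refine (Complex.re_le_norm _).trans ?_
    rw [norm_mul, Complex.norm_exp]
    have : (Complex.I * (μ : ℂ) * (s : ℂ)).re = 0 := by simp
    rw [this, Real.exp_zero, one_mul]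
  have key : 1 - σE ^ 2 * s ^ 2 / 2 ≤ ‖S‖ := by
    rw [← hsum]
    exact hle.trans (hTre ▸ habs)
  have ha : 0 ≤ ‖S‖ := norm_nonneg _
  have hb : 0 ≤ σE ^ 2 * s ^ 2 := by positivity
  by_cases hb2 : σE ^ 2 * s ^ 2 ≤ 2
  · have h4 : 0 ≤ 1 - σE ^ 2 * s ^ 2 / 2 := by linarith
    have h5 : (1 - σE ^ 2 * s ^ 2 / 2) ^ 2 ≤ ‖S‖ ^ 2 :=
      pow_le_pow_left₀ h4 key 2
    nlinarith [sq_nonneg (σE ^ 2 * s ^ 2)]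
  · nlinarith [sq_nonneg (‖S‖)]

lemma near_point (K : ℕ) (hK : 0 < K) (x : ℝ) (hx0 : 0 ≤ x) (hx1 : x ≤ (K : ℝ) - 1 / 2) :
    ∃ j : ℕ, j < K ∧ |x - (j : ℝ)| ≤ 1 / 2 := by
  have h0 : (0 : ℤ) ≤ ⌊x + 1 / 2⌋ := Int.floor_nonneg.mpr (by linarith)
  have hfl : (⌊x + 1 / 2⌋ : ℝ) ≤ x + 1 / 2 := Int.floor_le _
  have hfu : x + 1 / 2 < ⌊x + 1 / 2⌋ + 1 := Int.lt_floor_add_one _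
  have hle : ⌊x + 1 / 2⌋ ≤ (K : ℤ) := by
    have : (⌊x + 1 / 2⌋ : ℝ) ≤ (K : ℝ) := by linarith
    exact_mod_cast this
  by_cases hc : ⌊x + 1 / 2⌋ ≤ (K : ℤ) - 1
  · refine ⟨⌊x + 1 / 2⌋.toNat, ?_, ?_⟩
    · omega
    · have hcast : ((⌊x + 1 / 2⌋.toNat : ℕ) : ℝ) = (⌊x + 1 / 2⌋ : ℝ) := by
        exact_mod_cast congrArg (Int.cast : ℤ → ℝ) (Int.toNat_of_nonneg h0)
      rw [abs_le, hcast]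
      constructor <;> linarith
  · have hfK : ⌊x + 1 / 2⌋ = (K : ℤ) := by omega
    refine ⟨K - 1, Nat.sub_lt hK one_pos, ?_⟩
    have hxval : x = (K : ℝ) - 1 / 2 := by
      rw [hfK] at hfl
      push_cast at hfl
      linarith
    have hK1 : ((K - 1 : ℕ) : ℝ) = (K : ℝ) - 1 := by
      have : (1 : ℕ) ≤ K := hK
      push_cast [Nat.cast_sub this]
      ring
    rw [hxval, hK1]
    rw [abs_le]
    constructor <;> linarith

lemma move_herm {n : ℕ} (P : Matrix (Fin n) (Fin n) ℂ) (hPh : Pᴴ = P) (a b : Fin n → ℂ) :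
    ∑ k, starRingEnd ℂ (a k) * (P *ᵥ b) k = ∑ k, starRingEnd ℂ ((P *ᵥ a) k) * b k := by
  have hPc : ∀ k l, P k l = starRingEnd ℂ (P l k) := by
    intro k l
    conv_lhs => rw [← hPh]
    simp [Matrix.conjTranspose_apply]
  simp only [Matrix.mulVec, dotProduct, Finset.mul_sum, map_sum, Finset.sum_mul]
  rw [Finset.sum_comm]
  refine Finset.sum_congr rfl fun l _ => Finset.sum_congr rfl fun k _ => ?_
  rw [hPc k l, map_mul]
  ring

/-- Slow equilibration, persistence part: for a pure state |ψ(t)⟩ with energy standard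
deviation σ_E and effective dimension d_eff, ε > 0, τ = 2ε/σ_E, and P the projector onto
span{|ψ(jτ)⟩ : j = 0,…,K−1}, for all t ∈ [0, (K−1/2)τ] one has Tr(Pρ_t) ≥ 1 − ε² and
hence D_P(ρ_t, ω) ≥ 1 − ε² − √(K/d_eff). -/
theorem stmt_19 {n : ℕ} (c : Fin n → ℂ) (E : Fin n → ℝ)
    (hnorm : ∑ j, ‖c j‖ ^ 2 = 1)
    (σE : ℝ) (hσE : 0 < σE)
    (hσ : σE ^ 2 = ∑ j, ‖c j‖ ^ 2 * (E j) ^ 2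
        - (∑ j, ‖c j‖ ^ 2 * E j) ^ 2)
    (ε : ℝ) (hε : 0 < ε) (τ : ℝ) (hτ : τ = 2 * ε / σE)
    (K : ℕ) (hK : 0 < K)
    (ψ : ℝ → Fin n → ℂ)
    (hψ : ∀ t j, ψ t j = c j * Complex.exp (-Complex.I * (E j : ℂ) * t))
    (ρt : ℝ → Matrix (Fin n) (Fin n) ℂ)
    (hρt : ∀ t, ρt t = Matrix.of fun j k => ψ t j * starRingEnd ℂ (ψ t k))
    (ω : Matrix (Fin n) (Fin n) ℂ)
    (hω : ∀ j k, ω j k = if E j = E k then c j * starRingEnd ℂ (c k) else 0)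
    (deff : ℝ) (hdeff : 0 < deff) (hωp : ((ω * ω).trace).re ≤ 1 / deff)
    (P : Matrix (Fin n) (Fin n) ℂ)
    (hP : P * P = P) (hPh : Pᴴ = P) (hrank : P.rank ≤ K)
    (hfix : ∀ j : ℕ, j < K → P *ᵥ ψ (j * τ) = ψ (j * τ)) :
    ∀ t : ℝ, 0 ≤ t → t ≤ ((K : ℝ) - 1 / 2) * τ →
      1 - ε ^ 2 ≤ ((P * ρt t).trace).re ∧
      1 - ε ^ 2 - Real.sqrt (K / deff) ≤ ‖(P * (ρt t - ω)).trace‖ := by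
  intro t ht0 ht1
  have hτpos : 0 < τ := by rw [hτ]; positivity
  obtain ⟨j, hjK, hjd⟩ := near_point K hK (t / τ) (div_nonneg ht0 hτpos.le)
    ((div_le_iff₀ hτpos).mpr ht1)
  set s : ℝ := t - (j : ℝ) * τ with hsdef
  -- |s| ≤ τ/2 and σE^2 s^2 ≤ ε^2
  have hs : |s| ≤ τ / 2 := by
    have h1 : s = τ * (t / τ - (j : ℝ)) := by field_simp [hsdef]; ring
    rw [h1, abs_mul, abs_of_pos hτpos]
    calc τ * |t / τ - (j : ℝ)| ≤ τ * (1 / 2) := by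
          exact mul_le_mul_of_nonneg_left hjd hτpos.le
      _ = τ / 2 := by ring
  have hss : σE ^ 2 * s ^ 2 ≤ ε ^ 2 := by
    have h1 : s ^ 2 ≤ (τ / 2) ^ 2 := by
      rw [← sq_abs s]
      exact pow_le_pow_left₀ (abs_nonneg s) hs 2
    have h2 : σE ^ 2 * s ^ 2 ≤ σE ^ 2 * (τ / 2) ^ 2 :=
      mul_le_mul_of_nonneg_left h1 (sq_nonneg σE)
    have h3 : σE ^ 2 * (τ / 2) ^ 2 = ε ^ 2 := by
      rw [hτ]
      field_simp
    exact le_of_le_of_eq h2 h3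
  set u : Fin n → ℂ := ψ ((j : ℝ) * τ) with hu
  set v : Fin n → ℂ := ψ t with hv
  have hPu : P *ᵥ u = u := hfix j hjK
  set A : ℂ := ∑ k, starRingEnd ℂ (u k) * v k with hA
  -- A is the survival amplitude
  have hAeq : A = ∑ k, ((‖c k‖ ^ 2 : ℝ) : ℂ)
      * Complex.exp (-Complex.I * (E k : ℂ) * (s : ℂ)) := by
    rw [hA]
    refine Finset.sum_congr rfl fun k _ => ?_
    rw [hu, hv, hψ, hψ, map_mul, ← Complex.exp_conj]
    have hc1 : (starRingEnd ℂ) (-Complex.I * (E k : ℂ) * ((j : ℝ) * τ : ℝ))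
        = Complex.I * (E k : ℂ) * (((j : ℝ) * τ : ℝ) : ℂ) := by
      simp [map_mul, Complex.conj_ofReal]
    rw [hc1]
    have hc2 : starRingEnd ℂ (c k) * Complex.exp (Complex.I * (E k : ℂ) * (((j : ℝ) * τ : ℝ) : ℂ))
        * (c k * Complex.exp (-Complex.I * (E k : ℂ) * (t : ℂ)))
        = (starRingEnd ℂ (c k) * c k) *
          (Complex.exp (Complex.I * (E k : ℂ) * (((j : ℝ) * τ : ℝ) : ℂ))
            * Complex.exp (-Complex.I * (E k : ℂ) * (t : ℂ))) := by ring
    rw [hc2, ← Complex.exp_add]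
    have hc3 : starRingEnd ℂ (c k) * c k = ((‖c k‖ ^ 2 : ℝ) : ℂ) := by
      rw [mul_comm, Complex.mul_conj]
      norm_cast
      exact (Complex.sq_norm _).symm
    have hc4 : Complex.I * (E k : ℂ) * (((j : ℝ) * τ : ℝ) : ℂ)
        + -Complex.I * (E k : ℂ) * (t : ℂ) = -Complex.I * (E k : ℂ) * (s : ℂ) := by
      rw [hsdef]
      push_cast
      ring
    rw [hc3, hc4]
  have hsurv : 1 - ε ^ 2 ≤ ‖A‖ ^ 2 := by
    have h1 := survival c E hnorm σE hσ s
    rw [← hAeq] at h1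
    linarith
  -- norm of u is 1
  have hu1 : ∑ k, ‖u k‖ ^ 2 = 1 := by
    rw [← hnorm]
    refine Finset.sum_congr rfl fun k _ => ?_
    rw [hu, hψ, norm_mul, mul_pow, Complex.norm_exp]
    have : (-Complex.I * (E k : ℂ) * (((j : ℝ) * τ : ℝ) : ℂ)).re = 0 := by simp
    rw [this, Real.exp_zero, one_pow, mul_one]
  -- A in terms of P v
  have hA2 : ∑ k, starRingEnd ℂ (u k) * (P *ᵥ v) k = A := by
    rw [move_herm P hPh u v, hPu]
  -- Cauchy–Schwarz
  have hCS : ‖A‖ ^ 2 ≤ ∑ k, ‖(P *ᵥ v) k‖ ^ 2 := by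
    have h1 := cs_abs_sq (fun k => starRingEnd ℂ (u k)) (fun k => (P *ᵥ v) k)
    rw [hA2] at h1
    simp only [Complex.norm_conj] at h1
    rw [hu1, one_mul] at h1
    exact h1
  -- trace identity
  have hPP : P *ᵥ (P *ᵥ v) = P *ᵥ v := by rw [Matrix.mulVec_mulVec, hP]
  have htrace : (P * ρt t).trace = ((∑ k, ‖(P *ᵥ v) k‖ ^ 2 : ℝ) : ℂ) := by
    have h1 : (P * ρt t).trace = ∑ k, starRingEnd ℂ (v k) * (P *ᵥ v) k := by
      rw [hρt, Matrix.trace]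
      simp only [Matrix.diag_apply, Matrix.mul_apply, Matrix.of_apply, Matrix.mulVec,
        dotProduct, Finset.mul_sum]
      refine Finset.sum_congr rfl fun a _ => Finset.sum_congr rfl fun b _ => ?_
      rw [← hv]
      ring
    rw [h1, ← hPP, move_herm P hPh, hPP]
    push_cast
    refine Finset.sum_congr rfl fun k _ => ?_
    rw [mul_comm, Complex.mul_conj]
    norm_cast
    exact (Complex.sq_norm _).symm
  have part1 : 1 - ε ^ 2 ≤ ((P * ρt t).trace).re := by
    rw [htrace, Complex.ofReal_re]
    linarith
  refine ⟨part1, ?_⟩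
  -- ω is Hermitian
  have hωh : ωᴴ = ω := by
    ext k l
    rw [Matrix.conjTranspose_apply, hω, hω]
    by_cases h : E l = E k
    · rw [if_pos h, if_pos h.symm]
      simp [Complex.star_def, map_mul, Complex.conj_conj]
      ring
    · rw [if_neg h, if_neg (fun hh => h hh.symm)]
      simp
  -- trace of P bounded by K
  have hPtr : (P.trace).re ≤ (K : ℝ) := by
    rw [trace_idem_eq_rank P hP]
    simp only [Complex.natCast_re]
    exact_mod_cast hrank
  have hPfrob : ∑ j', ∑ k, ‖P j' k‖ ^ 2 = (P.trace).re := by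
    have h1 := trace_sq_herm P hPh
    rw [hP] at h1
    exact h1.symm
  have hωfrob : ∑ j', ∑ k, ‖ω j' k‖ ^ 2 ≤ 1 / deff := by
    rw [← trace_sq_herm ω hωh]
    exact hωp
  have hfrobnn : (0:ℝ) ≤ ∑ j', ∑ k, ‖ω j' k‖ ^ 2 :=
    Finset.sum_nonneg fun _ _ => Finset.sum_nonneg fun _ _ => sq_nonneg _
  -- |Tr(Pω)| ≤ sqrt(K/deff)
  have hPc : ∀ k l, P k l = starRingEnd ℂ (P l k) := by
    intro k l
    conv_lhs => rw [← hPh]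
    simp [Matrix.conjTranspose_apply]
  have hPω : ‖(P * ω).trace‖ ≤ Real.sqrt ((K : ℝ) / deff) := by
    have h5 : (P * ω).trace = ∑ i : Fin n × Fin n,
        starRingEnd ℂ (P i.2 i.1) * ω i.2 i.1 := by
      rw [Matrix.trace, Fintype.sum_prod_type]
      refine Finset.sum_congr rfl fun a _ => ?_
      rw [Matrix.diag_apply, Matrix.mul_apply]
      refine Finset.sum_congr rfl fun b _ => ?_
      rw [← hPc]
    have h6 := cs_abs_sq (fun i : Fin n × Fin n => starRingEnd ℂ (P i.2 i.1))
      (fun i : Fin n × Fin n => ω i.2 i.1)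
    rw [← h5] at h6
    simp only [Complex.norm_conj] at h6
    have h7 : ∑ i : Fin n × Fin n, ‖P i.2 i.1‖ ^ 2
        = ∑ j', ∑ k, ‖P j' k‖ ^ 2 := by
      rw [Fintype.sum_prod_type]
      exact Finset.sum_comm
    have h8 : ∑ i : Fin n × Fin n, ‖ω i.2 i.1‖ ^ 2
        = ∑ j', ∑ k, ‖ω j' k‖ ^ 2 := by
      rw [Fintype.sum_prod_type]
      exact Finset.sum_comm
    rw [h7, h8, hPfrob] at h6
    have h9 : (P.trace).re * (∑ j', ∑ k, ‖ω j' k‖ ^ 2) ≤ (K : ℝ) * (1 / deff) := by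
      have hptrnn : (0:ℝ) ≤ (P.trace).re := by
        rw [← hPfrob]
        exact Finset.sum_nonneg fun _ _ => Finset.sum_nonneg fun _ _ => sq_nonneg _
      exact mul_le_mul hPtr hωfrob hfrobnn (by positivity)
    rw [Real.le_sqrt (norm_nonneg _) (by positivity)]
    calc ‖(P * ω).trace‖ ^ 2 ≤ _ := h6
      _ ≤ (K : ℝ) * (1 / deff) := h9
      _ = (K : ℝ) / deff := by ring
  -- conclude
  have hsplit : (P * (ρt t - ω)).trace = (P * ρt t).trace - (P * ω).trace := by
    rw [Matrix.mul_sub, Matrix.trace_sub]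
  rw [hsplit]
  have h10 : ‖(P * ρt t).trace‖ - ‖(P * ω).trace‖
      ≤ ‖(P * ρt t).trace - (P * ω).trace‖ := by
    exact norm_sub_norm_le _ _
  have h11 : ((P * ρt t).trace).re ≤ ‖(P * ρt t).trace‖ := Complex.re_le_norm _
  linarith
end
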